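/- Let r be a prime with r ≡ 2 (mod 3) and ε a non-square in F_r^×. Define G_3(r) = { A^3 : A ∈ C_ns(r) } ∪ { diag(1,-1)·A^3 : A ∈ C_ns(r) }. Then the intersection S(G_3(r)) = G_3(r) ∩ SL(2, F_r) has order 2(r+1)/3. -/

import Mathlib

open Polynomial Matrix

section
variable {r : ℕ} [Fact r.Prime]

noncomputable def myq (ε : ZMod r) : (ZMod r)[X] := X ^ 2 - C ε

lemma myJ_sq (ε : ZMod r) :
    (aeval (!![0, ε; 1, 0] : Matrix (Fin 2) (Fin 2) (ZMod r))) (myq ε) = 0 := by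
  simp only [myq, map_sub, map_pow, aeval_X, aeval_C]
  ext i j
  fin_cases i <;> fin_cases j <;>
    simp [Matrix.algebraMap_matrix_apply, pow_two, Matrix.mul_apply, Fin.sum_univ_two]

noncomputable def myψ (ε : ZMod r) : AdjoinRoot (myq ε) →+* Matrix (Fin 2) (Fin 2) (ZMod r) :=
  Ideal.Quotient.lift (Ideal.span {myq ε}) (aeval !![0, ε; 1, 0]).toRingHom (by
    intro a ha
    rw [Ideal.mem_span_singleton] at ha
    obtain ⟨c, rfl⟩ := ha
    simp [myJ_sq])

lemma myψ_mk (ε a b : ZMod r) :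
    myψ ε (AdjoinRoot.mk (myq ε) (C a + C b * X)) = !![a, ε * b; b, a] := by
  show Ideal.Quotient.lift _ _ _ (Ideal.Quotient.mk _ _) = _
  rw [Ideal.Quotient.lift_mk]
  simp only [AlgHom.toRingHom_eq_coe, RingHom.coe_coe, map_add, _root_.map_mul, aeval_C, aeval_X]
  rw [Matrix.algebraMap_eq_diagonal, Matrix.algebraMap_eq_diagonal]
  ext i j
  fin_cases i <;> fin_cases j <;>
    simp [Matrix.mul_apply, Fin.sum_univ_two, Matrix.diagonal, mul_comm]

lemma exists_repr (ε : ZMod r) (x : AdjoinRoot (myq ε)) :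
    ∃ a b : ZMod r, x = AdjoinRoot.mk (myq ε) (C a + C b * X) := by
  obtain ⟨p, rfl⟩ := AdjoinRoot.mk_surjective x
  have hmonic : (myq ε).Monic := by
    simpa [myq] using monic_X_pow_sub_C ε (two_ne_zero)
  have hq2 : (myq ε).natDegree = 2 := by
    simpa [myq] using natDegree_X_pow_sub_C (n := 2) (r := ε)
  have hne1 : myq ε ≠ 1 := by
    intro h
    rw [h] at hq2
    simp at hq2
  have hdeg : (p %ₘ myq ε).natDegree < 2 := hq2 ▸ natDegree_modByMonic_lt p hmonic hne1
  obtain ⟨b, a, hab⟩ := exists_eq_X_add_C_of_natDegree_le_one (p := p %ₘ myq ε) (by omega)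
  refine ⟨a, b, ?_⟩
  have hmk : AdjoinRoot.mk (myq ε) p = AdjoinRoot.mk (myq ε) (p %ₘ myq ε) := by
    rw [AdjoinRoot.mk_eq_mk]
    rw [modByMonic_eq_sub_mul_div p (myq ε)]
    exact ⟨p /ₘ myq ε, by ring⟩
  rw [hmk, hab]
  congr 1
  ring


lemma det_form (ε a b : ZMod r) : (!![a, ε * b; b, a]).det = a ^ 2 - ε * b ^ 2 := by
  simp [Matrix.det_fin_two_of]; ring

lemma finite_F (ε : ZMod r) : Finite (AdjoinRoot (myq ε)) := by
  haveI : NeZero r := ⟨(Fact.out : r.Prime).ne_zero⟩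
  have hmonic : (myq ε).Monic := by
    simpa [myq] using monic_X_pow_sub_C ε (two_ne_zero)
  exact Finite.of_equiv _ (AdjoinRoot.powerBasis' hmonic).basis.equivFun.symm.toEquiv

lemma card_F (ε : ZMod r) : Nat.card (AdjoinRoot (myq ε)) = r ^ 2 := by
  haveI : NeZero r := ⟨(Fact.out : r.Prime).ne_zero⟩
  have hmonic : (myq ε).Monic := by
    simpa [myq] using monic_X_pow_sub_C ε (two_ne_zero)
  have hq2 : (myq ε).natDegree = 2 := by
    simpa [myq] using natDegree_X_pow_sub_C (n := 2) (r := ε)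
  rw [Nat.card_congr (AdjoinRoot.powerBasis' hmonic).basis.equivFun.toEquiv, Nat.card_fun]
  simp [Nat.card_zmod, hq2]


def TT (ε : ZMod r) (c : ZMod r) : Set (AdjoinRoot (myq ε)) :=
  {y | (∃ x, y = x ^ 3) ∧ (myψ ε y).det = c}

lemma core (hr : r % 3 = 2) (hodd : r % 2 = 1) (ε : ZMod r) (hε0 : ε ≠ 0)
    [Fact (Irreducible (myq ε))] :
    ∃ k : ℕ, (TT ε 1).ncard = k ∧ (TT ε (-1)).ncard = k ∧ 3 * k = r + 1 := by
  haveI := finite_F ε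
  haveI : Fintype (AdjoinRoot (myq ε)) := Fintype.ofFinite _
  set F : Type _ := AdjoinRoot (myq ε) with hF
  let nH : F →* ZMod r := Matrix.detMonoidHom.comp (myψ ε).toMonoidHom
  have hnH : ∀ y : F, nH y = (myψ ε y).det := fun y => rfl
  let N : Fˣ →* (ZMod r)ˣ := Units.map nH
  have hNval : ∀ u : Fˣ, ((N u : (ZMod r)ˣ) : ZMod r) = nH (u : F) := fun u => rfl
  have hord1 : ∀ d : (ZMod r)ˣ, d ^ 3 = 1 → d = 1 := by
    intro d hd
    have h2 : orderOf d ∣ 3 := orderOf_dvd_of_pow_eq_one hd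
    have h3 : orderOf d ∣ r - 1 := by
      have h4 := orderOf_dvd_card (x := d)
      rwa [ZMod.card_units] at h4
    have h5 : ¬ (3 ∣ r - 1) := by
      have h6 : 2 ≤ r := (Fact.out : r.Prime).two_le
      omega
    have h6 : Nat.gcd 3 (r - 1) = 1 := (Nat.prime_three.coprime_iff_not_dvd).mpr h5
    have h7 : orderOf d ∣ 1 := h6 ▸ Nat.dvd_gcd h2 h3
    exact orderOf_eq_one_iff.mp (Nat.dvd_one.mp h7)
  have hNsurj : Function.Surjective N := by
    intro c
    obtain ⟨a, b, hab⟩ : ∃ a b : ZMod r, a ^ 2 - ε * b ^ 2 = (c : ZMod r) := by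
      have hcard : Fintype.card (ZMod r) % 2 = 1 := by rwa [ZMod.card]
      have hf : (X ^ 2 - C (c : ZMod r)).degree = 2 := by
        simpa using degree_X_pow_sub_C (by norm_num : 0 < 2) (c : ZMod r)
      have hg : (C (-ε) * X ^ 2 : (ZMod r)[X]).degree = 2 := by
        rw [degree_C_mul (neg_ne_zero.mpr hε0), degree_X_pow]
        norm_cast
      obtain ⟨A, B, h⟩ := FiniteField.exists_root_sum_quadratic hf hg hcard
      refine ⟨A, B, ?_⟩
      simp only [eval_sub, eval_pow, eval_X, eval_C, eval_mul, eval_neg] at h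
      linear_combination h
    have hdet : nH (AdjoinRoot.mk (myq ε) (C a + C b * X)) = (c : ZMod r) := by
      rw [hnH, myψ_mk, det_form, hab]
    have hy0 : (AdjoinRoot.mk (myq ε) (C a + C b * X) : F) ≠ 0 := by
      intro h0
      rw [h0] at hdet
      have : nH 0 = 0 := by rw [hnH, map_zero, Matrix.det_zero]
      rw [this] at hdet
      exact c.ne_zero hdet.symm
    refine ⟨Units.mk0 _ hy0, Units.ext ?_⟩
    rw [hNval]
    exact hdet
  have hcardU : Fintype.card Fˣ = r ^ 2 - 1 := by
    rw [Fintype.card_units, ← Nat.card_eq_fintype_card, card_F]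
  set K := N.ker with hK
  have hKcard : (r - 1) * Nat.card K = r ^ 2 - 1 := by
    have h1 := Subgroup.card_eq_card_quotient_mul_card_subgroup K
    have h2 : Nat.card (Fˣ ⧸ K) = r - 1 := by
      rw [Nat.card_congr (QuotientGroup.quotientKerEquivOfSurjective N hNsurj).toEquiv,
        Nat.card_eq_fintype_card, ZMod.card_units]
    rw [h2] at h1
    rw [← h1, Nat.card_eq_fintype_card, hcardU]
  have hK1 : Nat.card K = r + 1 := by
    have key : (r - 1) * (r + 1) = r ^ 2 - 1 := by
      obtain ⟨s, rfl⟩ : ∃ s, r = s + 1 := ⟨r - 1, by omega⟩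
      have e1 : (s + 1) ^ 2 = s * (s + 2) + 1 := by ring
      rw [e1, Nat.add_sub_cancel, Nat.add_sub_cancel]
    have h2 : (r - 1) * Nat.card K = (r - 1) * (r + 1) := by rw [hKcard, key]
    have hrpos : 0 < r - 1 := by
      have := (Fact.out : r.Prime).two_le
      omega
    exact Nat.eq_of_mul_eq_mul_left hrpos h2
  let c3 : K →* Fˣ := (powMonoidHom 3).comp K.subtype
  have hker : Nat.card c3.ker = 3 := by
    have h3dvd : (3 : ℕ) ∣ Fintype.card Fˣ := by
      rw [hcardU]
      have hsq : r ^ 2 % 3 = 1 := by rw [Nat.pow_mod, hr]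
      have := (Fact.out : r.Prime).two_le
      have : 1 ≤ r ^ 2 := Nat.one_le_pow _ _ (by omega)
      omega
    obtain ⟨ζ, hζ⟩ := exists_prime_orderOf_dvd_card 3 h3dvd
    have hprim : IsPrimitiveRoot ζ 3 := hζ ▸ IsPrimitiveRoot.orderOf ζ
    have hcard3 : Nat.card (rootsOfUnity 3 F) = 3 := hprim.card_rootsOfUnity'
    have hmem : ∀ u : K, u ∈ c3.ker ↔ ((u : Fˣ) : Fˣ) ^ 3 = 1 := by
      intro u
      rw [MonoidHom.mem_ker]
      constructor
      · intro h; exact h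
      · intro h; exact h
    have e : c3.ker ≃ rootsOfUnity 3 F :=
      { toFun := fun u => ⟨(u.1 : Fˣ), by
          rw [mem_rootsOfUnity]
          exact (hmem u.1).mp u.2⟩
        invFun := fun w => ⟨⟨w.1, by
          rw [hK, MonoidHom.mem_ker]
          refine hord1 _ ?_
          rw [← map_pow]
          have h1 : (w.1 : Fˣ) ^ 3 = 1 := (mem_rootsOfUnity 3 w.1).mp w.2
          rw [h1, _root_.map_one]⟩, by
          rw [MonoidHom.mem_ker]
          exact (mem_rootsOfUnity 3 w.1).mp w.2⟩
        left_inv := fun u => rfl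
        right_inv := fun w => rfl }
    rw [Nat.card_congr e, hcard3]
  have hIm : Nat.card K = Nat.card c3.range * 3 := by
    rw [← hker, Subgroup.card_eq_card_quotient_mul_card_subgroup c3.ker]
    congr 1
    exact Nat.card_congr (QuotientGroup.quotientKerEquivRange c3).toEquiv
  have hT1 : TT ε 1 = (fun u : Fˣ => (u : F)) '' ((c3.range : Subgroup Fˣ) : Set Fˣ) := by
    ext y
    constructor
    · rintro ⟨⟨x, rfl⟩, hdet⟩
      have hdet' : nH (x ^ 3) = 1 := by rw [hnH]; exact hdet
      have hx0 : x ≠ 0 := by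
        rintro rfl
        rw [zero_pow (by norm_num)] at hdet'
        have h0 : nH 0 = 0 := by rw [hnH, map_zero, Matrix.det_zero]
        rw [h0] at hdet'
        exact one_ne_zero hdet'.symm
      have hNu : N (Units.mk0 x hx0) = 1 := by
        refine hord1 _ (Units.ext ?_)
        have : ((N (Units.mk0 x hx0) ^ 3 : (ZMod r)ˣ) : ZMod r) = nH (x ^ 3) := by
          rw [← _root_.map_pow, hNval]
          norm_num
        rw [this, hdet', Units.val_one]
      refine ⟨Units.mk0 x hx0 ^ 3, ⟨⟨Units.mk0 x hx0, MonoidHom.mem_ker.mpr hNu⟩, rfl⟩, ?_⟩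
      show ((Units.mk0 x hx0 ^ 3 : Fˣ) : F) = x ^ 3
      rw [Units.val_pow_eq_pow_val, Units.val_mk0]
    · rintro ⟨u, ⟨v, rfl⟩, rfl⟩
      have hc3 : (c3 v : Fˣ) = ((v : Fˣ)) ^ 3 := rfl
      constructor
      · exact ⟨((v : Fˣ) : F), by show ((c3 v : Fˣ) : F) = _; rw [hc3, Units.val_pow_eq_pow_val]⟩
      · rw [← hnH, ← hNval, hc3, _root_.map_pow]
        have hv1 : N (v : Fˣ) = 1 := MonoidHom.mem_ker.mp v.2
        rw [hv1, one_pow, Units.val_one]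
  obtain ⟨v0, hv0⟩ := hNsurj (-1)
  have hnHv0 : nH ((v0 : Fˣ) : F) = -1 := by
    rw [← hNval, hv0, Units.val_neg, Units.val_one]
  have hT2 : TT ε (-1) = (fun y : F => ((v0 : Fˣ) : F) ^ 3 * y) '' TT ε 1 := by
    have hvinv : ((v0 : Fˣ) : F) * ((v0⁻¹ : Fˣ) : F) = 1 := by
      rw [← Units.val_mul, mul_inv_cancel, Units.val_one]
    have hnHvinv : nH ((v0⁻¹ : Fˣ) : F) = -1 := by
      have h1 : nH ((v0 : Fˣ) : F) * nH ((v0⁻¹ : Fˣ) : F) = 1 := by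
        rw [← _root_.map_mul, hvinv, _root_.map_one]
      rw [hnHv0] at h1
      have h2 : (-1 : ZMod r) * ((-1) * nH ((v0⁻¹ : Fˣ) : F)) = (-1) * 1 := by rw [h1]
      simpa using h2
    ext y
    constructor
    · rintro ⟨⟨x, rfl⟩, hdet⟩
      have hdet' : nH (x ^ 3) = -1 := by rw [hnH]; exact hdet
      refine ⟨((v0⁻¹ : Fˣ) : F) ^ 3 * x ^ 3, ⟨⟨((v0⁻¹ : Fˣ) : F) * x, by rw [mul_pow]⟩, ?_⟩, ?_⟩
      · rw [← hnH, _root_.map_mul, _root_.map_pow, hnHvinv, hdet']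
        ring
      · show ((v0 : Fˣ) : F) ^ 3 * (((v0⁻¹ : Fˣ) : F) ^ 3 * x ^ 3) = x ^ 3
        rw [← mul_assoc, ← mul_pow, hvinv, one_pow, one_mul]
    · rintro ⟨w, ⟨⟨x, rfl⟩, hdet⟩, rfl⟩
      have hdet' : nH (x ^ 3) = 1 := by rw [hnH]; exact hdet
      constructor
      · exact ⟨((v0 : Fˣ) : F) * x, by rw [mul_pow]⟩
      · rw [← hnH, _root_.map_mul, _root_.map_pow, hnHv0, hdet']
        ring
  refine ⟨Nat.card c3.range, ?_, ?_, ?_⟩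
  · rw [hT1, Set.ncard_image_of_injective _ (fun a b h => Units.ext h)]
    rw [← Nat.card_coe_set_eq]
    rfl
  · rw [hT2, Set.ncard_image_of_injective, hT1,
      Set.ncard_image_of_injective _ (fun a b h => Units.ext h), ← Nat.card_coe_set_eq]
    · rfl
    · exact mul_right_injective₀ (pow_ne_zero 3 (Units.ne_zero (v0 : Fˣ)))
  · omega

end

theorem stmt_8 (r : ℕ) [Fact r.Prime] (hr : r % 3 = 2)
    (ε : ZMod r) (hε : ¬ IsSquare ε) :
    Set.ncard {M : Matrix (Fin 2) (Fin 2) (ZMod r) |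
      ((∃ A : Matrix (Fin 2) (Fin 2) (ZMod r),
          (∃ a b : ZMod r, (a, b) ≠ (0, 0) ∧ A = !![a, ε * b; b, a]) ∧
          M = A ^ 3) ∨
       (∃ A : Matrix (Fin 2) (Fin 2) (ZMod r),
          (∃ a b : ZMod r, (a, b) ≠ (0, 0) ∧ A = !![a, ε * b; b, a]) ∧
          M = !![(1 : ZMod r), 0; 0, -1] * A ^ 3)) ∧
      M.det = 1} = 2 * (r + 1) / 3 := by
  classical
  haveI : NeZero r := ⟨(Fact.out : r.Prime).ne_zero⟩
  have hodd : r % 2 = 1 := by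
    rcases (Fact.out : r.Prime).eq_two_or_odd with h | h
    · exfalso
      subst h
      exact hε ⟨ε, by decide +revert⟩
    · exact h
  have hε0 : ε ≠ 0 := fun h => hε (h ▸ ⟨0, by simp⟩)
  haveI : Fact (Irreducible (myq ε)) :=
    ⟨X_pow_sub_C_irreducible_of_prime Nat.prime_two (fun b hb => hε ⟨b, by rw [← hb]; ring⟩)⟩
  obtain ⟨k, hk1, hk2, hk3⟩ := core hr hodd ε hε0
  set D : Matrix (Fin 2) (Fin 2) (ZMod r) := !![(1 : ZMod r), 0; 0, -1] with hD
  have hDdet : D.det = -1 := by simp [hD, Matrix.det_fin_two_of]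
  have h2ne : (2 : ZMod r) ≠ 0 := by
    rw [show (2 : ZMod r) = ((2 : ℕ) : ZMod r) by norm_num, Ne,
      ZMod.natCast_eq_zero_iff]
    intro hdvd
    have h2 := (Fact.out : r.Prime).two_le
    have h3 := Nat.le_of_dvd (by norm_num) hdvd
    omega
  have h1ne : (1 : ZMod r) ≠ 0 := one_ne_zero
  have hψinj : Function.Injective (myψ ε) := (myψ ε).injective
  have hDD : D * D = 1 := by
    ext i j
    fin_cases i <;> fin_cases j <;> simp [hD, Matrix.mul_apply, Fin.sum_univ_two]
  have hDinj : Function.Injective (fun M : Matrix (Fin 2) (Fin 2) (ZMod r) => D * M) := by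
    intro M M' h
    have h' : D * M = D * M' := h
    have h2 : D * (D * M) = D * (D * M') := by rw [h']
    rwa [← mul_assoc, ← mul_assoc, hDD, one_mul, one_mul] at h2
  have hDmul : ∀ c d : ZMod r, D * !![c, ε * d; d, c] = !![c, ε * d; -d, -c] := by
    intro c d
    ext i j
    fin_cases i <;> fin_cases j <;> simp [hD, Matrix.mul_apply, Fin.sum_univ_two]
  have hzero : ∀ x : AdjoinRoot (myq ε), x = AdjoinRoot.mk (myq ε) (C 0 + C 0 * X) → x = 0 := by
    intro x hx
    rw [hx]
    simp
  have hset : {M : Matrix (Fin 2) (Fin 2) (ZMod r) |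
      ((∃ A : Matrix (Fin 2) (Fin 2) (ZMod r),
          (∃ a b : ZMod r, (a, b) ≠ (0, 0) ∧ A = !![a, ε * b; b, a]) ∧
          M = A ^ 3) ∨
       (∃ A : Matrix (Fin 2) (Fin 2) (ZMod r),
          (∃ a b : ZMod r, (a, b) ≠ (0, 0) ∧ A = !![a, ε * b; b, a]) ∧
          M = !![(1 : ZMod r), 0; 0, -1] * A ^ 3)) ∧
      M.det = 1} =
      (myψ ε) '' TT ε 1 ∪ (fun M => D * M) '' ((myψ ε) '' TT ε (-1)) := by
    ext M
    simp only [Set.mem_setOf_eq, Set.mem_union, Set.mem_image]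
    constructor
    · rintro ⟨hcase, hdet⟩
      rcases hcase with ⟨A, ⟨a, b, hab0, rfl⟩, rfl⟩ | ⟨A, ⟨a, b, hab0, rfl⟩, rfl⟩
      · left
        refine ⟨(AdjoinRoot.mk (myq ε) (C a + C b * X)) ^ 3, ⟨⟨_, rfl⟩, ?_⟩, ?_⟩
        · rw [map_pow, myψ_mk]
          exact hdet
        · rw [map_pow, myψ_mk]
      · right
        refine ⟨myψ ε ((AdjoinRoot.mk (myq ε) (C a + C b * X)) ^ 3),
          ⟨(AdjoinRoot.mk (myq ε) (C a + C b * X)) ^ 3, ⟨⟨_, rfl⟩, ?_⟩, rfl⟩, ?_⟩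
        · rw [map_pow, myψ_mk]
          have hd : D.det * (!![a, ε * b; b, a] ^ 3).det = 1 := by
            rw [← Matrix.det_mul]
            exact hdet
          rw [hDdet] at hd
          linear_combination -hd
        · rw [map_pow, myψ_mk]
    · rintro (⟨y, ⟨⟨x, rfl⟩, hdet⟩, rfl⟩ | ⟨M', ⟨y, ⟨⟨x, rfl⟩, hdet⟩, rfl⟩, rfl⟩)
      · obtain ⟨a, b, hx⟩ := exists_repr ε x
        have hA : myψ ε x = !![a, ε * b; b, a] := by rw [hx, myψ_mk]
        have hab0 : (a, b) ≠ (0, 0) := by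
          intro h0
          rw [Prod.mk.injEq] at h0
          obtain ⟨rfl, rfl⟩ := h0
          have hx0 : x = 0 := hzero x hx
          rw [hx0, zero_pow (by norm_num), map_zero, Matrix.det_zero] at hdet
          exact h1ne hdet.symm
        refine ⟨Or.inl ⟨myψ ε x, ⟨a, b, hab0, hA⟩, by rw [← map_pow]⟩, ?_⟩
        rw [map_pow] at hdet ⊢
        exact hdet
      · obtain ⟨a, b, hx⟩ := exists_repr ε x
        have hA : myψ ε x = !![a, ε * b; b, a] := by rw [hx, myψ_mk]
        have hab0 : (a, b) ≠ (0, 0) := by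
          intro h0
          rw [Prod.mk.injEq] at h0
          obtain ⟨rfl, rfl⟩ := h0
          have hx0 : x = 0 := hzero x hx
          rw [hx0, zero_pow (by norm_num), map_zero, Matrix.det_zero] at hdet
          exact h1ne (by linear_combination hdet)
        refine ⟨Or.inr ⟨myψ ε x, ⟨a, b, hab0, hA⟩, by rw [← map_pow]⟩, ?_⟩
        rw [map_pow] at hdet
        rw [map_pow, Matrix.det_mul, hDdet, hdet]
        norm_num
  
  have hdisj : Disjoint ((myψ ε) '' TT ε 1) ((fun M => D * M) '' ((myψ ε) '' TT ε (-1))) := by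
    rw [Set.disjoint_left]
    rintro M ⟨y, hy, rfl⟩ ⟨M', ⟨y', hy', rfl⟩, heq⟩
    have heq2 : D * myψ ε y' = myψ ε y := heq
    obtain ⟨a, b, hyr⟩ := exists_repr ε y
    obtain ⟨c, d, hyr'⟩ := exists_repr ε y'
    have hA : myψ ε y = !![a, ε * b; b, a] := by rw [hyr, myψ_mk]
    have hA' : myψ ε y' = !![c, ε * d; d, c] := by rw [hyr', myψ_mk]
    have heq' : !![a, ε * b; b, a] = !![c, ε * d; -d, -c] := by
      rw [← hA, ← heq2, hA', hDmul]
    have e00 : a = c := by simpa using congrFun (congrFun heq' 0) 0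
    have e01 : ε * b = ε * d := by simpa using congrFun (congrFun heq' 0) 1
    have e10 : b = -d := by simpa using congrFun (congrFun heq' 1) 0
    have e11 : a = -c := by simpa using congrFun (congrFun heq' 1) 1
    have hbd : b = d := mul_left_cancel₀ hε0 e01
    rw [← e00] at e11
    rw [← hbd] at e10
    have h2a : 2 * a = 0 := by linear_combination e11
    have h2b : 2 * b = 0 := by linear_combination e10
    have ha0 : a = 0 := by
      rcases mul_eq_zero.mp h2a with h | h
      · exact absurd h h2ne
      · exact h
    have hb0 : b = 0 := by
      rcases mul_eq_zero.mp h2b with h | h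
      · exact absurd h h2ne
      · exact h
    have hdet1 : ((myψ ε) y).det = 1 := hy.2
    rw [hA, ha0, hb0, det_form] at hdet1
    simp at hdet1
  rw [hset, Set.ncard_union_eq hdisj (Set.toFinite _) (Set.toFinite _),
    Set.ncard_image_of_injective _ hψinj,
    Set.ncard_image_of_injective _ hDinj,
    Set.ncard_image_of_injective _ hψinj, hk1, hk2]
  omega
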